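/- Let X be a finite multiset of reals, θ ∈ ℝ, and k ∈ ℕ, and assume that (counting multiplicity) X has more than k elements x with x ≤ θ and more than k elements x with θ < x. Define ℓ* = sInf {a ∈ ℝ : card{x ∈ X : a < x ≤ θ} ≤ k} and u* = sSup {b ∈ ℝ : card{x ∈ X : θ < x ≤ b} ≤ k} (counts with multiplicity). Then {θ' ∈ ℝ : card{x ∈ X : min(θ,θ') < x ≤ max(θ,θ')} ≤ k} = Set.Ico ℓ* u*. (This is the claim that the set of thresholds changing at most k of the comparison outcomes is the half-open interval [ℓ*, u*) given by the displayed inf/sup formulas in the path-changeable-rate extension.) -/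
import Mathlib

private lemma card_filter_le_of_imp (X : Multiset ℝ) (p q : ℝ → Prop)
    [DecidablePred p] [DecidablePred q] (h : ∀ x ∈ X, p x → q x) :
    Multiset.card (X.filter p) ≤ Multiset.card (X.filter q) := by
  have h1 : X.filter p = (X.filter q).filter p := by
    rw [Multiset.filter_filter]
    refine (Multiset.filter_congr (fun x hx => ?_)).symm
    constructor
    · rintro ⟨hp, _⟩; exact hp
    · intro hp; exact ⟨hp, h x hx hp⟩
  rw [h1]
  exact Multiset.card_le_card (Multiset.filter_le _ _)

private lemma gap_right (X : Multiset ℝ) (r : ℝ) :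
    ∃ δ > 0, ∀ x ∈ X, ¬(r < x ∧ x ≤ r + δ) := by
  classical
  set s : Finset ℝ := X.toFinset.filter (fun x => r < x) with hs
  by_cases hne : s.Nonempty
  · have hr : r < s.min' hne := (Finset.mem_filter.mp (s.min'_mem hne)).2
    refine ⟨(s.min' hne - r)/2, by linarith, ?_⟩
    rintro x hx ⟨h1, h2⟩
    have hxs : x ∈ s := Finset.mem_filter.mpr ⟨Multiset.mem_toFinset.mpr hx, h1⟩
    have := s.min'_le x hxs
    linarith
  · refine ⟨1, one_pos, ?_⟩
    rintro x hx ⟨h1, _⟩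
    exact hne ⟨x, Finset.mem_filter.mpr ⟨Multiset.mem_toFinset.mpr hx, h1⟩⟩

theorem threshold_range_with_exceptions_is_Ico
    (X : Multiset ℝ) (θ : ℝ) (k : ℕ)
    (hle : k < Multiset.card (X.filter (fun x => x ≤ θ)))
    (hgt : k < Multiset.card (X.filter (fun x => θ < x)))
    (lstar ustar : ℝ)
    (hl : lstar = sInf {a : ℝ |
      Multiset.card (X.filter (fun x => a < x ∧ x ≤ θ)) ≤ k})
    (hu : ustar = sSup {b : ℝ |
      Multiset.card (X.filter (fun x => θ < x ∧ x ≤ b)) ≤ k}) :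
    {θ' : ℝ |
        Multiset.card (X.filter (fun x => min θ θ' < x ∧ x ≤ max θ θ')) ≤ k}
      = Set.Ico lstar ustar := by
  classical
  set S : Set ℝ := {a : ℝ | Multiset.card (X.filter (fun x => a < x ∧ x ≤ θ)) ≤ k} with hS
  set T : Set ℝ := {b : ℝ | Multiset.card (X.filter (fun x => θ < x ∧ x ≤ b)) ≤ k} with hT
  -- θ belongs to both S and T
  have hθS : θ ∈ S := by
    have : X.filter (fun x => θ < x ∧ x ≤ θ) = 0 := by
      rw [Multiset.filter_eq_nil]
      rintro x _ ⟨h1, h2⟩; exact absurd h2 (not_le.mpr h1)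
    simp [hS, this]
  have hθT : θ ∈ T := by
    have : X.filter (fun x => θ < x ∧ x ≤ θ) = 0 := by
      rw [Multiset.filter_eq_nil]
      rintro x _ ⟨h1, h2⟩; exact absurd h2 (not_le.mpr h1)
    simp [hT, this]
  have hSne : S.Nonempty := ⟨θ, hθS⟩
  have hTne : T.Nonempty := ⟨θ, hθT⟩
  -- S is bounded below
  have hScard : (X.filter (fun x => x ≤ θ)).toFinset.Nonempty := by
    rw [Multiset.toFinset_nonempty]
    intro h0
    rw [h0] at hle; simp at hle
  set m : ℝ := (X.filter (fun x => x ≤ θ)).toFinset.min' hScard with hm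
  have hSbdd : BddBelow S := by
    refine ⟨m, fun a ha => ?_⟩
    by_contra hcon
    push_neg at hcon
    have : Multiset.card (X.filter (fun x => x ≤ θ)) ≤
        Multiset.card (X.filter (fun x => a < x ∧ x ≤ θ)) := by
      refine card_filter_le_of_imp X _ _ (fun x hx hxθ => ?_)
      have hxm : m ≤ x := by
        refine Finset.min'_le _ _ ?_
        rw [Multiset.mem_toFinset, Multiset.mem_filter]
        exact ⟨hx, hxθ⟩
      exact ⟨lt_of_lt_of_le hcon hxm, hxθ⟩
    exact absurd (le_trans this ha) (not_le.mpr hle)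
  -- T is bounded above
  have hTcard : (X.filter (fun x => θ < x)).toFinset.Nonempty := by
    rw [Multiset.toFinset_nonempty]
    intro h0
    rw [h0] at hgt; simp at hgt
  set M : ℝ := (X.filter (fun x => θ < x)).toFinset.max' hTcard with hM
  have hTbdd : BddAbove T := by
    refine ⟨M, fun b hb => ?_⟩
    by_contra hcon
    push_neg at hcon
    have : Multiset.card (X.filter (fun x => θ < x)) ≤
        Multiset.card (X.filter (fun x => θ < x ∧ x ≤ b)) := by
      refine card_filter_le_of_imp X _ _ (fun x hx hxθ => ?_)
      have hxM : x ≤ M := by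
        refine Finset.le_max' _ _ ?_
        rw [Multiset.mem_toFinset, Multiset.mem_filter]
        exact ⟨hx, hxθ⟩
      exact ⟨hxθ, le_of_lt (lt_of_le_of_lt hxM hcon)⟩
    exact absurd (le_trans this hb) (not_le.mpr hgt)
  -- lstar ∈ S
  have hlS : lstar ∈ S := by
    obtain ⟨δ, hδ, hgap⟩ := gap_right X lstar
    have hlt : sInf S < lstar + δ := by rw [← hl]; linarith
    obtain ⟨s, hsS, hs⟩ := exists_lt_of_csInf_lt hSne hlt
    have hls : lstar ≤ s := hl ▸ csInf_le hSbdd hsS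
    have : Multiset.card (X.filter (fun x => lstar < x ∧ x ≤ θ)) ≤
        Multiset.card (X.filter (fun x => s < x ∧ x ≤ θ)) := by
      refine card_filter_le_of_imp X _ _ (fun x hx hp => ?_)
      refine ⟨?_, hp.2⟩
      by_contra hxs
      push_neg at hxs
      exact hgap x hx ⟨hp.1, by linarith⟩
    exact le_trans this hsS
  -- ustar ∉ T
  have huT : ustar ∉ T := by
    intro huIn
    obtain ⟨δ, hδ, hgap⟩ := gap_right X ustar
    have hmem : ustar + δ ∈ T := by
      have : Multiset.card (X.filter (fun x => θ < x ∧ x ≤ ustar + δ)) ≤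
          Multiset.card (X.filter (fun x => θ < x ∧ x ≤ ustar)) := by
        refine card_filter_le_of_imp X _ _ (fun x hx hp => ?_)
        refine ⟨hp.1, ?_⟩
        by_contra hxu
        push_neg at hxu
        exact hgap x hx ⟨hxu, hp.2⟩
      exact le_trans this huIn
    have := hu ▸ le_csSup hTbdd hmem
    linarith
  have hlθ : lstar ≤ θ := hl ▸ csInf_le hSbdd hθS
  have hθu : θ < ustar := by
    have h1 : θ ≤ ustar := hu ▸ le_csSup hTbdd hθT
    rcases lt_or_eq_of_le h1 with h | h
    · exact h
    · exact absurd (h ▸ hθT) huT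
  ext θ'
  simp only [Set.mem_setOf_eq, Set.mem_Ico]
  rcases le_or_gt θ' θ with hcase | hcase
  · rw [min_eq_right hcase, max_eq_left hcase]
    constructor
    · intro h
      have hθ'S : θ' ∈ S := h
      exact ⟨hl ▸ csInf_le hSbdd hθ'S, lt_of_le_of_lt hcase hθu⟩
    · rintro ⟨h1, _⟩
      have : Multiset.card (X.filter (fun x => θ' < x ∧ x ≤ θ)) ≤
          Multiset.card (X.filter (fun x => lstar < x ∧ x ≤ θ)) := by
        refine card_filter_le_of_imp X _ _ (fun x _ hp => ?_)
        exact ⟨lt_of_le_of_lt h1 hp.1, hp.2⟩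
      exact le_trans this hlS
  · rw [min_eq_left (le_of_lt hcase), max_eq_right (le_of_lt hcase)]
    constructor
    · intro h
      have hθ'T : θ' ∈ T := h
      have h1 : θ' ≤ ustar := hu ▸ le_csSup hTbdd hθ'T
      rcases lt_or_eq_of_le h1 with h2 | h2
      · exact ⟨le_trans hlθ (le_of_lt hcase), h2⟩
      · exact absurd (h2 ▸ hθ'T) huT
    · rintro ⟨_, h2⟩
      rw [hu] at h2
      obtain ⟨t, htT, ht⟩ := exists_lt_of_lt_csSup hTne h2
      have : Multiset.card (X.filter (fun x => θ < x ∧ x ≤ θ')) ≤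
          Multiset.card (X.filter (fun x => θ < x ∧ x ≤ t)) := by
        refine card_filter_le_of_imp X _ _ (fun x _ hp => ?_)
        exact ⟨hp.1, le_of_lt (lt_of_le_of_lt hp.2 ht)⟩
      exact le_trans this htT
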